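/- Let C be a category equipped with a functor s : I → C, let A be an abelian category, let T : C → A be a functor, and let λ ⊢ m be an ordered shifted partition of length n with λ_0 = 0 and λ_i ≥ 1 for all 1 ≤ i ≤ n. Then the subobject ⋂_{i=1}^{n} ker(Ts(f_{{i}_λ})) of Ts(m) is the internal direct sum of the subobjects im(Ts(f_{m̲∖S})) ∩ ⋂_{i∈S} ker(Ts(f_{{i}})), where S ranges over the subsets of m̲ such that S ∩ {i}_λ ≠ ∅ for every i ∈ {1,…,n}. -/

import Mathlib

open CategoryTheory CategoryTheory.Limits

/-- The category `𝓘`: objects are the non-negative integers, and a morphism `m ⟶ n`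
is a subset of `{0, …, min m n − 1}` (the 0-based incarnation of `{1, …, min(m,n)}`),
thought of as the partial identity defined on that subset.  Composition is given by
intersection, and the identity of `n` is the full subset. -/
abbrev Icat : Type := ℕ

instance : Category Icat where
  Hom m n := {S : Finset ℕ // S ⊆ Finset.range (min m n)}
  id n := ⟨Finset.range n, by simp⟩
  comp {m n k} f g := ⟨f.1 ∩ g.1, by
    intro i hi
    rw [Finset.mem_inter] at hi
    have h1 := f.2 hi.1
    have h2 := g.2 hi.2
    rw [Finset.mem_range] at h1 h2 ⊢
    omega⟩
  id_comp {m n} f := by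
    apply Subtype.ext
    dsimp
    rw [Finset.inter_eq_right]
    intro i hi
    have := f.2 hi
    rw [Finset.mem_range] at this ⊢
    omega
  comp_id {m n} f := by
    apply Subtype.ext
    dsimp
    rw [Finset.inter_eq_left]
    intro i hi
    have := f.2 hi
    rw [Finset.mem_range] at this ⊢
    omega
  assoc f g h := by
    apply Subtype.ext
    exact Finset.inter_assoc _ _ _

/-- The endomorphism of `m` in `𝓘` given by the partial identity defined on the
subset `R` (intersected with the ambient set `{0, …, m−1}`). -/
def pId (m : ℕ) (R : Finset ℕ) : (m : Icat) ⟶ (m : Icat) :=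
  ⟨R ∩ Finset.range m, by
    intro i hi
    rw [Finset.mem_inter] at hi
    simpa [Nat.min_self] using hi.2⟩

universe v u w z

variable {C : Type u} [Category.{v} C] {A : Type w} [Category.{z} A] [Abelian A]

/-- The endomorphism `f_T` of `m` in `𝓘` that "forgets" the subset `T ⊆ m̲`, i.e. the
partial identity defined on `m̲ ∖ T` (0-based). -/
def fEnd (m : ℕ) (T : Finset ℕ) : (m : Icat) ⟶ (m : Icat) :=
  pId m (Finset.range m \ T)

/-- The `i`-th block `{i}_λ` of an ordered shifted partition `λ = (lam 0, …, lam n)`,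
in 0-based coordinates: `{λ_0 + ⋯ + λ_{i−1}, …, λ_0 + ⋯ + λ_i − 1}`. -/
def blkOf (lam : ℕ → ℕ) (i : ℕ) : Finset ℕ :=
  Finset.Ico (∑ j ∈ Finset.range i, lam j) (∑ j ∈ Finset.range (i + 1), lam j)

/-- The Finset of subsets `S ⊆ m̲` meeting every block `{i}_λ`, `i ∈ {1, …, n}`. -/
noncomputable def meetsAllBlocks (m n : ℕ) (lam : ℕ → ℕ) : Finset (Finset ℕ) := by
  classical
  exact (Finset.range m).powerset.filter
    (fun S => ∀ i ∈ Finset.Icc 1 n, (S ∩ blkOf lam i).Nonempty)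

/-- The subobject `im(T s(f_{m̲ ∖ S})) ⊓ ⨅_{i ∈ S} ker(T s(f_{{i}}))` of `T(s(m))`. -/
noncomputable def pieceW (s : Icat ⥤ C) (T : C ⥤ A) (m : ℕ) (S : Finset ℕ) :
    Subobject (T.obj (s.obj m)) :=
  imageSubobject (T.map (s.map (fEnd m (Finset.range m \ S))))
    ⊓ S.inf (fun i => kernelSubobject (T.map (s.map (fEnd m {i}))))

section AuxAlgebra

/-- Inclusion–exclusion style identity: for any family `x` of elements of an
abelian group indexed by finsets, `∑_{S ⊆ U} ∑_{R ⊆ S} (−1)^{|R|} x_{S∖R} = x_U`. -/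
lemma sum_sum_powerset_neg_one {M : Type*} [AddCommGroup M] (U : Finset ℕ)
    (x : Finset ℕ → M) :
    ∑ S ∈ U.powerset, ∑ R ∈ S.powerset, ((-1 : ℤ) ^ R.card) • x (S \ R) = x U := by
  classical
  induction U using Finset.induction generalizing x with
  | empty => simp
  | @insert a U ha IH =>
    have hdisj : ∀ {W : Finset ℕ}, a ∉ W →
        Disjoint W.powerset (W.powerset.image (insert a)) := by
      intro W haW
      rw [Finset.disjoint_left]
      intro S hS hS'
      obtain ⟨R, hR, rfl⟩ := Finset.mem_image.mp hS'
      exact haW (Finset.mem_powerset.mp hS (Finset.mem_insert_self a R))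
    have hinj : ∀ {W : Finset ℕ}, a ∉ W → ∀ R₁ ∈ W.powerset, ∀ R₂ ∈ W.powerset,
        insert a R₁ = insert a R₂ → R₁ = R₂ := by
      intro W haW R₁ h₁ R₂ h₂ h
      have ha₁ : a ∉ R₁ := fun hc => haW (Finset.mem_powerset.mp h₁ hc)
      have ha₂ : a ∉ R₂ := fun hc => haW (Finset.mem_powerset.mp h₂ hc)
      rw [← Finset.erase_insert ha₁, ← Finset.erase_insert ha₂, h]
    rw [Finset.powerset_insert, Finset.sum_union (hdisj ha),
      Finset.sum_image (hinj ha)]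
    have hinner : ∀ S ∈ U.powerset,
        ∑ R ∈ (insert a S).powerset, ((-1 : ℤ) ^ R.card) • x (insert a S \ R)
          = (∑ R ∈ S.powerset, ((-1 : ℤ) ^ R.card) • x (insert a (S \ R)))
            - ∑ R ∈ S.powerset, ((-1 : ℤ) ^ R.card) • x (S \ R) := by
      intro S hS
      have haS : a ∉ S := fun hc => ha (Finset.mem_powerset.mp hS hc)
      rw [Finset.powerset_insert, Finset.sum_union (hdisj haS),
        Finset.sum_image (hinj haS)]
      have h1 : ∀ R ∈ S.powerset,
          ((-1 : ℤ) ^ R.card) • x (insert a S \ R)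
            = ((-1 : ℤ) ^ R.card) • x (insert a (S \ R)) := by
        intro R hR
        have haR : a ∉ R := fun hc => haS (Finset.mem_powerset.mp hR hc)
        rw [Finset.insert_sdiff_of_notMem _ haR]
      have h2 : ∀ R ∈ S.powerset,
          ((-1 : ℤ) ^ (insert a R).card) • x (insert a S \ insert a R)
            = -(((-1 : ℤ) ^ R.card) • x (S \ R)) := by
        intro R hR
        have haR : a ∉ R := fun hc => haS (Finset.mem_powerset.mp hR hc)
        have harg : insert a S \ insert a R = S \ R := by
          ext y
          simp only [Finset.mem_sdiff, Finset.mem_insert]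
          constructor
          · rintro ⟨hy1 | hy1, hy2⟩
            · exact absurd (Or.inl hy1) hy2
            · exact ⟨hy1, fun hc => hy2 (Or.inr hc)⟩
          · rintro ⟨hy1, hy2⟩
            exact ⟨Or.inr hy1, fun hc => hc.elim (fun h => haS (h ▸ hy1)) hy2⟩
        rw [harg, Finset.card_insert_of_notMem haR, pow_succ, mul_comm, neg_one_mul,
          neg_smul]
      rw [Finset.sum_congr rfl h1, Finset.sum_congr rfl h2, Finset.sum_neg_distrib,
        ← sub_eq_add_neg]
    rw [Finset.sum_congr rfl hinner, Finset.sum_sub_distrib]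
    have key := IH (fun W => x (insert a W))
    rw [← key]
    abel

end AuxAlgebra

section AuxCat

variable (s : Icat ⥤ C) (T : C ⥤ A) (m : ℕ)

lemma pId_comp (R R' : Finset ℕ) : pId m R ≫ pId m R' = pId m (R ∩ R') := by
  apply Subtype.ext
  show (R ∩ Finset.range m) ∩ (R' ∩ Finset.range m) = (R ∩ R') ∩ Finset.range m
  ext x
  simp only [Finset.mem_inter]
  tauto

lemma pId_congr {R R' : Finset ℕ} (h : R ∩ Finset.range m = R' ∩ Finset.range m) :
    pId m R = pId m R' := Subtype.ext h

lemma pId_full : pId m (Finset.range m) = 𝟙 (m : Icat) := by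
  apply Subtype.ext
  show Finset.range m ∩ Finset.range m = Finset.range m
  simp

/-- The idempotent endomorphism of `T (s m)` given by "keeping" the coordinates in `R`. -/
def eM (R : Finset ℕ) : T.obj (s.obj m) ⟶ T.obj (s.obj m) :=
  T.map (s.map (pId m R))

lemma eM_comp (R R' : Finset ℕ) : eM s T m R ≫ eM s T m R' = eM s T m (R ∩ R') := by
  rw [eM, eM, eM, ← Functor.map_comp, ← Functor.map_comp, pId_comp]

lemma eM_congr {R R' : Finset ℕ} (h : R ∩ Finset.range m = R' ∩ Finset.range m) :
    eM s T m R = eM s T m R' := by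
  rw [eM, eM, pId_congr m h]

lemma eM_full : eM s T m (Finset.range m) = 𝟙 _ := by
  rw [eM, pId_full]
  simp

lemma fEnd_eq (B : Finset ℕ) :
    T.map (s.map (fEnd m B)) = eM s T m (Finset.range m \ B) := rfl

/-- If `B` is disjoint from `D`, then `eM B` factors through the idempotent
killing the coordinates in `D`. -/
lemma eM_kill_absorb {D B : Finset ℕ} (h : B ∩ D = ∅) :
    eM s T m B = eM s T m (Finset.range m \ D) ≫ eM s T m B := by
  rw [eM_comp]
  apply eM_congr
  ext x
  simp only [Finset.mem_inter, Finset.mem_sdiff]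
  constructor
  · rintro ⟨hB, hrm⟩
    have hxD : x ∉ D := by
      intro hD
      have hmem : x ∈ B ∩ D := Finset.mem_inter.mpr ⟨hB, hD⟩
      rw [h] at hmem
      exact absurd hmem (Finset.notMem_empty x)
    exact ⟨⟨⟨hrm, hxD⟩, hB⟩, hrm⟩
  · rintro ⟨⟨_, hB⟩, hrm⟩
    exact ⟨hB, hrm⟩

/-- The projection onto the "component" labelled by `S`:
`π_S = ∏_{i ∈ S} (1 − q_i) ∏_{i ∉ S} q_i`, written out by inclusion–exclusion. -/
noncomputable def piS (S : Finset ℕ) : T.obj (s.obj m) ⟶ T.obj (s.obj m) :=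
  ∑ R ∈ S.powerset, ((-1 : ℤ) ^ R.card) • eM s T m (S \ R)

lemma sum_piS :
    ∑ S ∈ (Finset.range m).powerset, piS s T m S = 𝟙 (T.obj (s.obj m)) := by
  rw [← eM_full s T m, ← sum_sum_powerset_neg_one (Finset.range m) (eM s T m)]
  rfl

lemma piS_comp_eM (S : Finset ℕ) : piS s T m S ≫ eM s T m S = piS s T m S := by
  rw [piS, Preadditive.sum_comp]
  refine Finset.sum_congr rfl fun R hR => ?_
  rw [Preadditive.zsmul_comp, eM_comp]
  congr 2
  rw [Finset.inter_eq_left]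
  exact (Finset.sdiff_subset).trans (le_refl S)

lemma piS_comp_q (S : Finset ℕ) (i : ℕ) (hi : i ∈ S) :
    piS s T m S ≫ eM s T m (Finset.range m \ {i}) = 0 := by
  classical
  rw [piS, Preadditive.sum_comp]
  simp only [Preadditive.zsmul_comp, eM_comp]
  have hS : S = insert i (S.erase i) := (Finset.insert_erase hi).symm
  rw [hS]
  have hie : i ∉ S.erase i := Finset.notMem_erase i S
  have hdisj : Disjoint (S.erase i).powerset ((S.erase i).powerset.image (insert i)) := by
    rw [Finset.disjoint_left]
    intro R hR hR'
    obtain ⟨R', hR', rfl⟩ := Finset.mem_image.mp hR'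
    exact hie (Finset.mem_powerset.mp hR (Finset.mem_insert_self i R'))
  have hinj : ∀ R₁ ∈ (S.erase i).powerset, ∀ R₂ ∈ (S.erase i).powerset,
      insert i R₁ = insert i R₂ → R₁ = R₂ := by
    intro R₁ h₁ R₂ h₂ h
    have h₁' : i ∉ R₁ := fun hc => hie (Finset.mem_powerset.mp h₁ hc)
    have h₂' : i ∉ R₂ := fun hc => hie (Finset.mem_powerset.mp h₂ hc)
    rw [← Finset.erase_insert h₁', ← Finset.erase_insert h₂', h]
  rw [Finset.powerset_insert, Finset.sum_union hdisj, Finset.sum_image hinj]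
  have hterm : ∀ R ∈ (S.erase i).powerset,
      ((-1 : ℤ) ^ (insert i R).card) •
          eM s T m ((insert i (S.erase i) \ insert i R) ∩ (Finset.range m \ {i}))
        = -(((-1 : ℤ) ^ R.card) •
            eM s T m ((insert i (S.erase i) \ R) ∩ (Finset.range m \ {i}))) := by
    intro R hR
    have hiR : i ∉ R := fun hc => hie (Finset.mem_powerset.mp hR hc)
    have harg : (insert i (S.erase i) \ insert i R) ∩ (Finset.range m \ {i})
        = (insert i (S.erase i) \ R) ∩ (Finset.range m \ {i}) := by
      ext y
      simp only [Finset.mem_inter, Finset.mem_sdiff, Finset.mem_insert,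
        Finset.mem_singleton, Finset.mem_erase]
      constructor
      · rintro ⟨⟨h1, h2⟩, h3, h4⟩
        exact ⟨⟨h1, fun hc => h2 (Or.inr hc)⟩, h3, h4⟩
      · rintro ⟨⟨h1, h2⟩, h3, h4⟩
        exact ⟨⟨h1, fun hc => hc.elim h4 h2⟩, h3, h4⟩
    rw [harg, Finset.card_insert_of_notMem hiR, pow_succ, mul_comm, neg_one_mul,
      neg_smul]
  rw [Finset.sum_congr rfl hterm, Finset.sum_neg_distrib]
  exact add_neg_cancel _

/-- If `y` "lives in the component labelled by `S'`", then composing with `eM B`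
keeps `y` if `S' ⊆ B` and kills it otherwise. -/
lemma comp_eM_of_component {Y : A} (y : Y ⟶ T.obj (s.obj m)) (S' : Finset ℕ)
    (hS' : S' ⊆ Finset.range m)
    (hy1 : y ≫ eM s T m S' = y)
    (hy2 : ∀ i ∈ S', y ≫ eM s T m (Finset.range m \ {i}) = 0)
    (B : Finset ℕ) (hB : B ⊆ Finset.range m) :
    y ≫ eM s T m B = if S' ⊆ B then y else 0 := by
  split_ifs with h
  · conv_lhs => rw [← hy1]
    rw [Category.assoc, eM_comp]
    have : S' ∩ B = S' := Finset.inter_eq_left.mpr h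
    rw [this, hy1]
  · obtain ⟨j, hjS', hjB⟩ := Finset.not_subset.mp h
    have hBj : B ∩ {j} = ∅ := by
      ext x
      simp only [Finset.mem_inter, Finset.mem_singleton, Finset.notMem_empty,
        iff_false, not_and]
      intro hxB hxj
      exact hjB (hxj ▸ hxB)
    rw [eM_kill_absorb s T m hBj, ← Category.assoc, hy2 j hjS', Limits.zero_comp]

/-- Key computation: a morphism living in the component labelled by `S'` is
reproduced by the projection `π_{S'}` and killed by all other projections. -/
lemma comp_piS_of_component {Y : A} (y : Y ⟶ T.obj (s.obj m)) (S' : Finset ℕ)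
    (hS' : S' ⊆ Finset.range m)
    (hy1 : y ≫ eM s T m S' = y)
    (hy2 : ∀ i ∈ S', y ≫ eM s T m (Finset.range m \ {i}) = 0)
    (S : Finset ℕ) (hS : S ⊆ Finset.range m) :
    y ≫ piS s T m S = if S = S' then y else 0 := by
  classical
  rw [piS, Preadditive.comp_sum]
  simp only [Preadditive.comp_zsmul]
  by_cases hss : S' ⊆ S
  · have hterm : ∀ R ∈ S.powerset,
        ((-1 : ℤ) ^ R.card) • (y ≫ eM s T m (S \ R))
          = if R ∈ (S \ S').powerset then ((-1 : ℤ) ^ R.card) • y else 0 := by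
      intro R hR
      rw [Finset.mem_powerset] at hR
      rw [comp_eM_of_component s T m y S' hS' hy1 hy2 (S \ R)
        ((Finset.sdiff_subset).trans hS)]
      have hiff : S' ⊆ S \ R ↔ R ∈ (S \ S').powerset := by
        rw [Finset.mem_powerset]
        constructor
        · intro h a haR
          rw [Finset.mem_sdiff]
          refine ⟨hR haR, fun hc' => ?_⟩
          exact (Finset.mem_sdiff.mp (h hc')).2 haR
        · intro h a haS'
          rw [Finset.mem_sdiff]
          exact ⟨hss haS', fun hc => (Finset.mem_sdiff.mp (h hc)).2 haS'⟩
      by_cases hc : S' ⊆ S \ R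
      · rw [if_pos hc, if_pos (hiff.mp hc)]
      · rw [if_neg hc, smul_zero, if_neg (fun h => hc (hiff.mpr h))]
    rw [Finset.sum_congr rfl hterm, Finset.sum_ite_mem]
    have hpow : S.powerset ∩ (S \ S').powerset = (S \ S').powerset :=
      Finset.inter_eq_right.mpr (Finset.powerset_mono.mpr Finset.sdiff_subset)
    rw [hpow, ← Finset.sum_smul, Finset.sum_powerset_neg_one_pow_card]
    have hcond : S = S' ↔ S \ S' = ∅ := by
      rw [Finset.sdiff_eq_empty_iff_subset]
      exact ⟨fun h => h ▸ le_refl S, fun h => le_antisymm h hss⟩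
    by_cases heq : S = S'
    · rw [if_pos heq, if_pos (hcond.mp heq), one_smul]
    · rw [if_neg heq, if_neg (fun h => heq (hcond.mpr h)), zero_smul]
  · have hterm : ∀ R ∈ S.powerset,
        ((-1 : ℤ) ^ R.card) • (y ≫ eM s T m (S \ R)) = 0 := by
      intro R hR
      rw [comp_eM_of_component s T m y S' hS' hy1 hy2 (S \ R)
        ((Finset.sdiff_subset).trans hS), if_neg, smul_zero]
      intro hc
      exact hss (hc.trans Finset.sdiff_subset)
    rw [Finset.sum_congr rfl hterm, Finset.sum_const_zero, if_neg]
    intro h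
    exact hss (h ▸ le_refl S)

end AuxCat

section AuxSub

lemma le_of_factors_arrow {X : A} {P Q : Subobject X} (h : Q.Factors P.arrow) :
    P ≤ Q :=
  Subobject.le_of_comm (Q.factorThru _ h) (Subobject.factorThru_arrow _ _ _)

lemma factors_sum {X Y : A} (P : Subobject X) {ι : Type*} (u : Finset ι)
    (f : ι → (Y ⟶ X)) (h : ∀ i ∈ u, P.Factors (f i)) :
    P.Factors (∑ i ∈ u, f i) := by
  classical
  have h2 : (∑ i ∈ u, if hi : i ∈ u then P.factorThru (f i) (h i hi) else 0) ≫ P.arrow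
      = ∑ i ∈ u, f i := by
    rw [Preadditive.sum_comp]
    exact Finset.sum_congr rfl fun i hi => by rw [dif_pos hi, Subobject.factorThru_arrow]
  rw [← h2]
  exact Subobject.factors_comp_arrow _

/-- A morphism factors through the image of an idempotent `g` iff it is fixed by `g`. -/
lemma factors_imageSubobject_iff {X Y : A} (g : X ⟶ X) (hg : g ≫ g = g) (y : Y ⟶ X) :
    (imageSubobject g).Factors y ↔ y ≫ g = y := by
  constructor
  · intro h
    have hu := Subobject.factorThru_arrow _ _ h
    have harr : (imageSubobject g).arrow ≫ g = (imageSubobject g).arrow := by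
      have h0 : (imageSubobject g).arrow ≫ (𝟙 X - g) = 0 := by
        apply zero_of_epi_comp (factorThruImageSubobject g)
        rw [← Category.assoc, imageSubobject_arrow_comp, Preadditive.comp_sub,
          Category.comp_id, hg, sub_self]
      rw [Preadditive.comp_sub, Category.comp_id, sub_eq_zero] at h0
      exact h0.symm
    rw [← hu, Category.assoc, harr]
  · intro hy
    have h1 := Subobject.factors_comp_arrow (y ≫ factorThruImageSubobject g)
    rwa [Category.assoc, imageSubobject_arrow_comp, hy] at h1

variable (s : Icat ⥤ C) (T : C ⥤ A) (m : ℕ)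

lemma factors_pieceW_iff {Y : A} (y : Y ⟶ T.obj (s.obj m)) (S : Finset ℕ)
    (hS : S ⊆ Finset.range m) :
    (pieceW s T m S).Factors y ↔
      (y ≫ eM s T m S = y ∧
        ∀ i ∈ S, y ≫ eM s T m (Finset.range m \ {i}) = 0) := by
  have hidem : (T.map (s.map (fEnd m (Finset.range m \ S))))
      ≫ (T.map (s.map (fEnd m (Finset.range m \ S))))
      = T.map (s.map (fEnd m (Finset.range m \ S))) := by
    rw [fEnd_eq, eM_comp, Finset.inter_self]
  have hmor : T.map (s.map (fEnd m (Finset.range m \ S))) = eM s T m S := by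
    rw [fEnd_eq, Finset.sdiff_sdiff_eq_self hS]
  rw [pieceW, Subobject.inf_factors, Subobject.finset_inf_factors,
    factors_imageSubobject_iff _ hidem, hmor]
  constructor
  · rintro ⟨hy1, hy2⟩
    refine ⟨hy1, fun i hi => ?_⟩
    exact (kernelSubobject_factors_iff _ _).mp (hy2 i hi)
  · rintro ⟨hy1, hy2⟩
    refine ⟨hy1, fun i hi => ?_⟩
    exact kernelSubobject_factors _ _ (hy2 i hi)

lemma mem_meetsAllBlocks (n : ℕ) (lam : ℕ → ℕ) (S : Finset ℕ) :
    S ∈ meetsAllBlocks m n lam ↔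
      (S ⊆ Finset.range m ∧ ∀ i ∈ Finset.Icc 1 n, (S ∩ blkOf lam i).Nonempty) := by
  rw [meetsAllBlocks]
  simp [Finset.mem_filter, Finset.mem_powerset]

end AuxSub

/-- Statement 16: let `C` be a category with a functor `s : 𝓘 ⥤ C`, `A` an abelian
category, `T : C ⥤ A` a functor and `λ ⊢ m` an ordered shifted partition of length `n`
with `λ_0 = 0` and `λ_i ≥ 1` for `1 ≤ i ≤ n`.  Then the subobject
`⨅_{i=1}^{n} ker(T s(f_{{i}_λ}))` of `T(s(m))` is the internal direct sum of the
subobjects `W_S = im(T s(f_{m̲ ∖ S})) ⊓ ⨅_{i ∈ S} ker(T s(f_{{i}}))`, where `S` ranges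
over the subsets of `m̲` meeting every block: i.e. the `W_S` have supremum
`⨅_{i=1}^{n} ker(T s(f_{{i}_λ}))`, and each `W_S` meets the supremum of the others
trivially. -/
theorem inf_ker_internal_direct_sum
    (s : Icat ⥤ C) (T : C ⥤ A) (n m : ℕ) (lam : ℕ → ℕ)
    (hsum : ∑ i ∈ Finset.range (n + 1), lam i = m) (h0 : lam 0 = 0)
    (h1 : ∀ i, 1 ≤ i → i ≤ n → 1 ≤ lam i) :
    ((meetsAllBlocks m n lam).sup (pieceW s T m)
        = (Finset.Icc 1 n).inf
            (fun i => kernelSubobject (T.map (s.map (fEnd m (blkOf lam i))))))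
    ∧ ∀ S ∈ meetsAllBlocks m n lam,
        pieceW s T m S ⊓ ((meetsAllBlocks m n lam).erase S).sup (pieceW s T m) = ⊥ := by
  classical
  -- a morphism factoring through `pieceW S'` lives in the component labelled `S'`
  have hcomp : ∀ (S' : Finset ℕ), S' ⊆ Finset.range m → ∀ {Y : A}
      (y : Y ⟶ T.obj (s.obj m)), (pieceW s T m S').Factors y →
      ∀ (S : Finset ℕ), S ⊆ Finset.range m →
        y ≫ piS s T m S = if S = S' then y else 0 := by
    intro S' hS' Y y hy S hS
    obtain ⟨hy1, hy2⟩ := (factors_pieceW_iff s T m y S' hS').mp hy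
    exact comp_piS_of_component s T m y S' hS' hy1 hy2 S hS
  constructor
  · apply le_antisymm
    · -- each piece is contained in the intersection of the block kernels
      apply Finset.sup_le
      intro S hS
      obtain ⟨hSsub, hSmeet⟩ := (mem_meetsAllBlocks m n lam S).mp hS
      apply Finset.le_inf
      intro i hi
      apply le_of_factors_arrow
      obtain ⟨hy1, hy2⟩ := (factors_pieceW_iff s T m _ S hSsub).mp
        (Subobject.factors_self (pieceW s T m S))
      apply kernelSubobject_factors
      obtain ⟨j, hj⟩ := hSmeet i hi
      rw [Finset.mem_inter] at hj
      show (pieceW s T m S).arrow ≫ eM s T m (Finset.range m \ blkOf lam i) = 0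
      have hdisj : (Finset.range m \ blkOf lam i) ∩ ({j} : Finset ℕ) = ∅ := by
        ext x
        simp only [Finset.mem_inter, Finset.mem_sdiff, Finset.mem_singleton,
          Finset.notMem_empty, iff_false, not_and]
        rintro ⟨_, hxblk⟩ hxj
        exact hxblk (hxj ▸ hj.2)
      rw [eM_kill_absorb s T m hdisj, ← Category.assoc, hy2 j hj.1, Limits.zero_comp]
    · -- conversely, the intersection of block kernels decomposes into the pieces
      apply le_of_factors_arrow
      set K := (Finset.Icc 1 n).inf
        (fun i => kernelSubobject (T.map (s.map (fEnd m (blkOf lam i))))) with hK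
      set y := K.arrow with hy
      have hker : ∀ i ∈ Finset.Icc 1 n,
          y ≫ eM s T m (Finset.range m \ blkOf lam i) = 0 := by
        intro i hi
        rw [← fEnd_eq]
        have hKle : K ≤ kernelSubobject (T.map (s.map (fEnd m (blkOf lam i)))) :=
          Finset.inf_le hi
        exact (kernelSubobject_factors_iff _ _).mp
          (Subobject.factors_of_le _ hKle (Subobject.factors_self K))
      have hdecomp : ∑ S ∈ meetsAllBlocks m n lam, y ≫ piS s T m S = y := by
        rw [Finset.sum_subset ?_ ?_, ← Preadditive.comp_sum, sum_piS, Category.comp_id]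
        · intro S hS
          exact Finset.mem_powerset.mpr ((mem_meetsAllBlocks m n lam S).mp hS).1
        · intro S hSpow hSnot
          have hSsub := Finset.mem_powerset.mp hSpow
          have : ∃ i ∈ Finset.Icc 1 n, S ∩ blkOf lam i = ∅ := by
            by_contra hc
            push_neg at hc
            exact hSnot ((mem_meetsAllBlocks m n lam S).mpr
              ⟨hSsub, fun i hi => hc i hi⟩)
          obtain ⟨i, hi, hempty⟩ := this
          rw [piS, Preadditive.comp_sum]
          apply Finset.sum_eq_zero
          intro R hR
          rw [Preadditive.comp_zsmul]
          have hdisj : (S \ R) ∩ blkOf lam i = ∅ := by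
            ext x
            simp only [Finset.mem_inter, Finset.mem_sdiff, Finset.notMem_empty,
              iff_false, not_and]
            rintro ⟨hxS, _⟩ hxblk
            have hx : x ∈ S ∩ blkOf lam i := Finset.mem_inter.mpr ⟨hxS, hxblk⟩
            rw [hempty] at hx
            exact absurd hx (Finset.notMem_empty x)
          rw [eM_kill_absorb s T m hdisj, ← Category.assoc, hker i hi,
            Limits.zero_comp, smul_zero]
      rw [← hdecomp]
      apply factors_sum
      intro S hS
      have hSsub := ((mem_meetsAllBlocks m n lam S).mp hS).1
      apply Subobject.factors_of_le _ (Finset.le_sup hS)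
      rw [factors_pieceW_iff s T m _ S hSsub]
      constructor
      · rw [Category.assoc, piS_comp_eM]
      · intro i hi
        rw [Category.assoc, piS_comp_q s T m S i hi, Limits.comp_zero]
  · -- independence
    intro S hS
    have hSsub := ((mem_meetsAllBlocks m n lam S).mp hS).1
    set Q := pieceW s T m S ⊓ ((meetsAllBlocks m n lam).erase S).sup (pieceW s T m)
      with hQ
    have hfac1 : (pieceW s T m S).Factors Q.arrow :=
      Subobject.factors_of_le _ inf_le_left (Subobject.factors_self Q)
    have heq1 : Q.arrow ≫ piS s T m S = Q.arrow := by
      rw [hcomp S hSsub Q.arrow hfac1 S hSsub, if_pos rfl]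
    have hle2 : ((meetsAllBlocks m n lam).erase S).sup (pieceW s T m)
        ≤ kernelSubobject (piS s T m S) := by
      apply Finset.sup_le
      intro S' hS'
      have hne : S' ≠ S := Finset.ne_of_mem_erase hS'
      have hS'sub := ((mem_meetsAllBlocks m n lam S').mp
        (Finset.mem_of_mem_erase hS')).1
      apply le_of_factors_arrow
      apply kernelSubobject_factors
      rw [hcomp S' hS'sub _ (Subobject.factors_self (pieceW s T m S')) S hSsub,
        if_neg (fun h => hne h.symm)]
    have heq2 : Q.arrow ≫ piS s T m S = 0 :=
      (kernelSubobject_factors_iff _ _).mp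
        (Subobject.factors_of_le _ (le_trans inf_le_right hle2) (Subobject.factors_self Q))
    have harrow : Q.arrow = 0 := by rw [← heq1, heq2]
    apply le_antisymm _ bot_le
    apply le_of_factors_arrow
    rw [Subobject.bot_factors_iff_zero]
    exact harrow
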